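/- Let $n\in\mathbb{N}$ and let $D, E, G \in \mathbb{C}^n$, $m\in[0,1)$, $g\in\mathbb{C}$, $f_0\in\mathbb{R}$ with $0\le|f_0|<|g|$, and let $c_1,\dots,c_6$ be the six coefficients of the extended Jerison–Lee formula (as functions of $m$, $|g|$, $f_0$). Then there exists a constant $C = C(m) > 0$ such that $c_1|G + c_2 D + c_3 E|^2 + c_4|D + c_5 E|^2 + c_6|E|^2 \ge C(|D|^2 + |E|^2 + |G|^2)$. -/

import Mathlib

/-- The coefficient `c₁` of the extended Jerison--Lee formula (`ag = |g|`). -/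
noncomputable def JLc1 (m ag f0 : ℝ) : ℝ := 3 * (ag ^ 2)⁻¹ * (ag ^ 2 - m * f0 ^ 2)

/-- The coefficient `c₂`. -/
noncomputable def JLc2 (m ag f0 : ℝ) : ℂ :=
  (1 / 3) * (1 - ((2 * m * f0 * Real.sqrt (ag ^ 2 - f0 ^ 2) /
    (ag ^ 2 - m * f0 ^ 2) : ℝ) : ℂ) * Complex.I)

/-- The coefficient `c₃`. -/
noncomputable def JLc3 (m ag f0 : ℝ) : ℂ :=
  -(1 / 3) * (1 + ((2 * m * f0 * Real.sqrt (ag ^ 2 - f0 ^ 2) /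
    (ag ^ 2 - m * f0 ^ 2) : ℝ) : ℂ) * Complex.I)

/-- The coefficient `c₄`. -/
noncomputable def JLc4 (m ag f0 : ℝ) : ℝ :=
  (1 / 3) * (5 - 3 * m + 4 * m * (1 - m) * f0 ^ 2 / (ag ^ 2 - m * f0 ^ 2))

/-- The coefficient `c₅`. -/
noncomputable def JLc5 (m ag f0 : ℝ) : ℂ :=
  ((((4 - 3 * m) * ag ^ 2 - m * (2 + m) * f0 ^ 2 + 2 * m ^ 2 * (ag ^ 2)⁻¹ * f0 ^ 4) /
      ((5 - 3 * m) * ag ^ 2 - m * (1 + m) * f0 ^ 2) : ℝ) : ℂ) +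
    (((2 * m * f0 * Real.sqrt (ag ^ 2 - f0 ^ 2) * (ag ^ 2 - m * f0 ^ 2)) /
      (ag ^ 2 * ((5 - 3 * m) * ag ^ 2 - m * (1 + m) * f0 ^ 2)) : ℝ) : ℂ) * Complex.I

/-- The coefficient `c₆`. -/
noncomputable def JLc6 (m ag f0 : ℝ) : ℝ :=
  ((3 - 2 * m) * ag ^ 2 + m * (5 - 6 * m) * f0 ^ 2) /
    ((5 - 3 * m) * ag ^ 2 - m * (1 + m) * f0 ^ 2)

variable {m a f0 : ℝ}


lemma hf2' (hfa : |f0| < a) : f0 ^ 2 < a ^ 2 := by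
  nlinarith [abs_nonneg f0, sq_abs f0]

lemma ha' (hfa : |f0| < a) : 0 < a := lt_of_le_of_lt (abs_nonneg f0) hfa

lemma hden' (hm0 : 0 ≤ m) (hm1 : m < 1) (hfa : |f0| < a) :
    (1 - m) * a ^ 2 ≤ a ^ 2 - m * f0 ^ 2 := by
  nlinarith [hf2' hfa, abs_nonneg f0]

lemma hdenpos (hm0 : 0 ≤ m) (hm1 : m < 1) (hfa : |f0| < a) : 0 < a ^ 2 - m * f0 ^ 2 := by
  have h1 := hden' hm0 hm1 hfa
  have h2 : 0 < (1 - m) * a ^ 2 :=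
    mul_pos (by linarith) (pow_pos (ha' hfa) 2)
  linarith

lemma c1_ge (hm0 : 0 ≤ m) (hm1 : m < 1) (hfa : |f0| < a) : 3 * (1 - m) ≤ JLc1 m a f0 := by
  unfold JLc1
  have ha := ha' hfa
  have h := hden' hm0 hm1 hfa
  have h2 : (0:ℝ) < a ^ 2 := by positivity
  calc 3 * (1 - m) = 3 * (a^2)⁻¹ * ((1-m) * a^2) := by field_simp
    _ ≤ 3 * (a^2)⁻¹ * (a^2 - m * f0^2) := by
        apply mul_le_mul_of_nonneg_left h; positivity

lemma c4_ge (hm0 : 0 ≤ m) (hm1 : m < 1) (hfa : |f0| < a) : 1 / 2 ≤ JLc4 m a f0 := by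
  unfold JLc4
  have h1 : 0 ≤ 4 * m * (1 - m) * f0 ^ 2 / (a ^ 2 - m * f0 ^ 2) := by
    apply div_nonneg _ (le_of_lt (hdenpos hm0 hm1 hfa))
    apply mul_nonneg (mul_nonneg (mul_nonneg (by norm_num) hm0) (by linarith)) (sq_nonneg f0)
  nlinarith

lemma c6denpos (hm0 : 0 ≤ m) (hm1 : m < 1) (hfa : |f0| < a) :
    0 < (5 - 3 * m) * a ^ 2 - m * (1 + m) * f0 ^ 2 := by
  have h1 : 0 ≤ (m + m ^ 2) * (a ^ 2 - f0 ^ 2) :=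
    mul_nonneg (by nlinarith) (le_of_lt (sub_pos.mpr (hf2' hfa)))
  have h2 : 0 < ((1 - m) * (5 + m)) * a ^ 2 :=
    mul_pos (mul_pos (by linarith) (by linarith)) (pow_pos (ha' hfa) 2)
  nlinarith

lemma c6_ge (hm0 : 0 ≤ m) (hm1 : m < 1) (hfa : |f0| < a) : 1 / 2 ≤ JLc6 m a f0 := by
  unfold JLc6
  have hd := c6denpos hm0 hm1 hfa
  rw [le_div_iff₀ hd]
  have h1 : 0 ≤ (m * (11 - 11 * m)) * f0 ^ 2 :=
    mul_nonneg (mul_nonneg hm0 (by linarith)) (sq_nonneg f0)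
  have h2 : 0 < (1 - m) * a ^ 2 := mul_pos (by linarith) (pow_pos (ha' hfa) 2)
  nlinarith

lemma t_bound (hm0 : 0 ≤ m) (hm1 : m < 1) (hfa : |f0| < a) :
    |2 * m * f0 * Real.sqrt (a ^ 2 - f0 ^ 2) / (a ^ 2 - m * f0 ^ 2)| ≤ 1 / (1 - m) := by
  set s := Real.sqrt (a ^ 2 - f0 ^ 2) with hs
  have hs0 : 0 ≤ s := Real.sqrt_nonneg _
  have hs2 : s ^ 2 = a ^ 2 - f0 ^ 2 := Real.sq_sqrt (by linarith [hf2' hfa])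
  have hkey : 2 * |f0| * s ≤ a ^ 2 := by nlinarith [sq_nonneg (|f0| - s), sq_abs f0]
  have hdp := hdenpos hm0 hm1 hfa
  have hnum : |2 * m * f0 * s| = 2 * m * |f0| * s := by
    rw [abs_mul, abs_mul, abs_mul, abs_of_nonneg hs0, abs_of_nonneg hm0, abs_of_nonneg (by norm_num : (0:ℝ) ≤ 2)]
  rw [abs_div, abs_of_pos hdp, hnum]
  have h1 : 2 * m * |f0| * s ≤ m * a ^ 2 := by nlinarith [abs_nonneg f0]
  have h2 := hden' hm0 hm1 hfa
  have h3 : (0:ℝ) < (1 - m) * a ^ 2 := mul_pos (by linarith) (pow_pos (ha' hfa) 2)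
  calc 2 * m * |f0| * s / (a ^ 2 - m * f0 ^ 2) ≤ m * a ^ 2 / ((1 - m) * a ^ 2) := by
        apply div_le_div₀ (by nlinarith [pow_pos (ha' hfa) 2]) h1 h3 h2
    _ = m / (1 - m) := mul_div_mul_right _ _ (pow_ne_zero 2 (ne_of_gt (ha' hfa)))
    _ ≤ 1 / (1 - m) := by gcongr <;> linarith

lemma c2_bound (hm0 : 0 ≤ m) (hm1 : m < 1) (hfa : |f0| < a) :
    ‖JLc2 m a f0‖ ≤ 4 / (1 - m) := by
  unfold JLc2
  have ht := t_bound hm0 hm1 hfa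
  have h1m : (0:ℝ) < 1 - m := by linarith
  have h1 : (1:ℝ) ≤ 1 / (1 - m) := by rw [le_div_iff₀ h1m]; linarith
  calc ‖(1/3 : ℂ) * (1 - ((2 * m * f0 * Real.sqrt (a ^ 2 - f0 ^ 2) / (a ^ 2 - m * f0 ^ 2) : ℝ) : ℂ) * Complex.I)‖
      = (1/3) * ‖(1:ℂ) - ((2 * m * f0 * Real.sqrt (a ^ 2 - f0 ^ 2) / (a ^ 2 - m * f0 ^ 2) : ℝ) : ℂ) * Complex.I‖ := by
        rw [norm_mul]; norm_num
    _ ≤ (1/3) * (‖(1:ℂ)‖ + ‖((2 * m * f0 * Real.sqrt (a ^ 2 - f0 ^ 2) / (a ^ 2 - m * f0 ^ 2) : ℝ) : ℂ) * Complex.I‖) := by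
        gcongr; exact norm_sub_le _ _
    _ ≤ 4 / (1 - m) := by
        rw [norm_mul, Complex.norm_I, Complex.norm_real, norm_one, Real.norm_eq_abs]
        rw [div_eq_mul_inv 4, div_eq_mul_inv 1] at *
        nlinarith [inv_pos.mpr h1m]
lemma c3_bound (hm0 : 0 ≤ m) (hm1 : m < 1) (hfa : |f0| < a) :
    ‖JLc3 m a f0‖ ≤ 4 / (1 - m) := by
  unfold JLc3
  have ht := t_bound hm0 hm1 hfa
  have h1m : (0:ℝ) < 1 - m := by linarith
  have h1 : (1:ℝ) ≤ 1 / (1 - m) := by rw [le_div_iff₀ h1m]; linarith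
  rw [norm_mul, norm_neg]
  calc ‖(1/3 : ℂ)‖ * ‖(1:ℂ) + ((2 * m * f0 * Real.sqrt (a ^ 2 - f0 ^ 2) / (a ^ 2 - m * f0 ^ 2) : ℝ) : ℂ) * Complex.I‖
      ≤ (1/3) * (‖(1:ℂ)‖ + ‖((2 * m * f0 * Real.sqrt (a ^ 2 - f0 ^ 2) / (a ^ 2 - m * f0 ^ 2) : ℝ) : ℂ) * Complex.I‖) := by
        have : ‖(1/3 : ℂ)‖ = 1/3 := by norm_num
        rw [this]; gcongr; exact norm_add_le _ _
    _ ≤ 4 / (1 - m) := by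
        rw [norm_mul, Complex.norm_I, Complex.norm_real, norm_one, Real.norm_eq_abs]
        rw [div_eq_mul_inv 4, div_eq_mul_inv 1] at *
        nlinarith [inv_pos.mpr h1m]

lemma c5den_ge (hm0 : 0 ≤ m) (hm1 : m < 1) (hfa : |f0| < a) :
    5 * (1 - m) * a ^ 2 ≤ (5 - 3 * m) * a ^ 2 - m * (1 + m) * f0 ^ 2 := by
  have h1 : 0 ≤ (m + m ^ 2) * (a ^ 2 - f0 ^ 2) :=
    mul_nonneg (by nlinarith) (le_of_lt (sub_pos.mpr (hf2' hfa)))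
  have h2 : 0 ≤ (m * (1 - m)) * a ^ 2 :=
    mul_nonneg (mul_nonneg hm0 (by linarith)) (sq_nonneg a)
  nlinarith

lemma c5_bound (hm0 : 0 ≤ m) (hm1 : m < 1) (hfa : |f0| < a) :
    ‖JLc5 m a f0‖ ≤ 4 / (1 - m) := by
  unfold JLc5
  have ha0 := ha' hfa
  have hf2 := hf2' hfa
  have h1m : (0:ℝ) < 1 - m := by linarith
  have ha2 : (0:ℝ) < a ^ 2 := by positivity
  have hD := c5den_ge hm0 hm1 hfa
  have hDpos : (0:ℝ) < 5 * (1 - m) * a ^ 2 := by positivity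
  have hDpos' := lt_of_lt_of_le hDpos hD
  set s := Real.sqrt (a ^ 2 - f0 ^ 2) with hs
  have hs0 : 0 ≤ s := Real.sqrt_nonneg _
  have hs2 : s ^ 2 = a ^ 2 - f0 ^ 2 := Real.sq_sqrt (by linarith)
  have hkey : 2 * |f0| * s ≤ a ^ 2 := by nlinarith [sq_nonneg (|f0| - s), sq_abs f0]
  -- real part bound
  have hr1 : |((4 - 3 * m) * a ^ 2 - m * (2 + m) * f0 ^ 2 + 2 * m ^ 2 * (a ^ 2)⁻¹ * f0 ^ 4) /
      ((5 - 3 * m) * a ^ 2 - m * (1 + m) * f0 ^ 2)| ≤ 7 / (5 * (1 - m)) := by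
    rw [abs_div, abs_of_pos hDpos']
    have hinv : 0 < (a ^ 2)⁻¹ := by positivity
    have hf4 : f0 ^ 4 ≤ a ^ 4 := by nlinarith [sq_nonneg f0]
    have hq : (a ^ 2)⁻¹ * f0 ^ 4 ≤ a ^ 2 := by
      have : (a ^ 2)⁻¹ * f0 ^ 4 ≤ (a ^ 2)⁻¹ * a ^ 4 := by
        apply mul_le_mul_of_nonneg_left hf4 (le_of_lt hinv)
      have h4 : (a ^ 2)⁻¹ * a ^ 4 = a ^ 2 := by field_simp
      linarith
    have hq0 : 0 ≤ (a ^ 2)⁻¹ * f0 ^ 4 := by positivity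
    have hnum : |(4 - 3 * m) * a ^ 2 - m * (2 + m) * f0 ^ 2 + 2 * m ^ 2 * (a ^ 2)⁻¹ * f0 ^ 4| ≤ 7 * a ^ 2 := by
      rw [abs_le]
      constructor
      · nlinarith [mul_nonneg hm0 (sq_nonneg f0), mul_nonneg (mul_nonneg hm0 hm0) (sq_nonneg f0)]
      · nlinarith [mul_nonneg hm0 (sq_nonneg f0), mul_nonneg (mul_nonneg hm0 hm0) (sq_nonneg f0),
          mul_nonneg (mul_nonneg hm0 hm0) hq0]
    calc |(4 - 3 * m) * a ^ 2 - m * (2 + m) * f0 ^ 2 + 2 * m ^ 2 * (a ^ 2)⁻¹ * f0 ^ 4| /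
          ((5 - 3 * m) * a ^ 2 - m * (1 + m) * f0 ^ 2)
        ≤ 7 * a ^ 2 / (5 * (1 - m) * a ^ 2) := by
          apply div_le_div₀ (by positivity) hnum hDpos hD
      _ = 7 / (5 * (1 - m)) := mul_div_mul_right _ _ (pow_ne_zero 2 (ne_of_gt ha0))
  -- imaginary part bound
  have hr2 : |2 * m * f0 * s * (a ^ 2 - m * f0 ^ 2) /
      (a ^ 2 * ((5 - 3 * m) * a ^ 2 - m * (1 + m) * f0 ^ 2))| ≤ 1 / (5 * (1 - m)) := by
    rw [abs_div, abs_of_pos (by positivity : (0:ℝ) < a ^ 2 * ((5 - 3 * m) * a ^ 2 - m * (1 + m) * f0 ^ 2))]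
    have hdp := hdenpos hm0 hm1 hfa
    have hnum : |2 * m * f0 * s * (a ^ 2 - m * f0 ^ 2)| ≤ m * a ^ 2 * a ^ 2 := by
      rw [abs_mul, abs_mul, abs_mul, abs_mul, abs_of_nonneg hs0, abs_of_nonneg hm0,
        abs_of_nonneg (by norm_num : (0:ℝ) ≤ 2), abs_of_pos hdp]
      have hd2 : a ^ 2 - m * f0 ^ 2 ≤ a ^ 2 := by nlinarith [mul_nonneg hm0 (sq_nonneg f0)]
      have h1 : 2 * m * |f0| * s ≤ m * a ^ 2 := by nlinarith [abs_nonneg f0]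
      have h0 : 0 ≤ 2 * m * |f0| * s := by positivity
      calc 2 * m * |f0| * s * (a ^ 2 - m * f0 ^ 2) ≤ m * a ^ 2 * (a ^ 2 - m * f0 ^ 2) :=
            mul_le_mul_of_nonneg_right h1 (le_of_lt hdp)
        _ ≤ m * a ^ 2 * a ^ 2 := by
            apply mul_le_mul_of_nonneg_left hd2; positivity
    calc |2 * m * f0 * s * (a ^ 2 - m * f0 ^ 2)| /
          (a ^ 2 * ((5 - 3 * m) * a ^ 2 - m * (1 + m) * f0 ^ 2))
        ≤ m * a ^ 2 * a ^ 2 / (a ^ 2 * (5 * (1 - m) * a ^ 2)) := by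
          apply div_le_div₀ (by positivity) hnum (by positivity)
          apply mul_le_mul_of_nonneg_left hD (le_of_lt ha2)
      _ ≤ 1 / (5 * (1 - m)) := by
          rw [show m * a ^ 2 * a ^ 2 = m * (a ^ 2 * a ^ 2) by ring,
            show a ^ 2 * (5 * (1 - m) * a ^ 2) = 5 * (1 - m) * (a ^ 2 * a ^ 2) by ring,
            mul_div_mul_right _ _ (by positivity : (a:ℝ) ^ 2 * a ^ 2 ≠ 0)]
          apply div_le_div₀ (by norm_num) (by linarith) (by positivity) le_rfl
  calc ‖(((((4 - 3 * m) * a ^ 2 - m * (2 + m) * f0 ^ 2 + 2 * m ^ 2 * (a ^ 2)⁻¹ * f0 ^ 4) /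
      ((5 - 3 * m) * a ^ 2 - m * (1 + m) * f0 ^ 2) : ℝ)) : ℂ) +
    (((2 * m * f0 * s * (a ^ 2 - m * f0 ^ 2)) /
      (a ^ 2 * ((5 - 3 * m) * a ^ 2 - m * (1 + m) * f0 ^ 2)) : ℝ) : ℂ) * Complex.I‖
      ≤ ‖((((4 - 3 * m) * a ^ 2 - m * (2 + m) * f0 ^ 2 + 2 * m ^ 2 * (a ^ 2)⁻¹ * f0 ^ 4) /
      ((5 - 3 * m) * a ^ 2 - m * (1 + m) * f0 ^ 2) : ℝ) : ℂ)‖ +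
        ‖(((2 * m * f0 * s * (a ^ 2 - m * f0 ^ 2)) /
      (a ^ 2 * ((5 - 3 * m) * a ^ 2 - m * (1 + m) * f0 ^ 2)) : ℝ) : ℂ) * Complex.I‖ :=
        norm_add_le _ _
    _ ≤ 4 / (1 - m) := by
        rw [norm_mul, Complex.norm_I, Complex.norm_real, Complex.norm_real, mul_one,
          Real.norm_eq_abs, Real.norm_eq_abs]
        have : 7 / (5 * (1 - m)) + 1 / (5 * (1 - m)) ≤ 4 / (1 - m) := by
          rw [← add_div, div_le_div_iff₀ (by positivity) h1m]
          nlinarith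
        linarith
lemma quad_bound (b x y z d gg : ℝ) (hb : 1 ≤ b) (hx : 0 ≤ x) (hy : 0 ≤ y) (hz : 0 ≤ z)
    (hd0 : 0 ≤ d) (hg0 : 0 ≤ gg) (hd : d ≤ y + b * z) (hg : gg ≤ x + b * d + b * z) :
    d ^ 2 + z ^ 2 + gg ^ 2 ≤ (6 * b ^ 4 + 6 * b ^ 2 + 3) * (x ^ 2 + y ^ 2 + z ^ 2) := by
  have hb0 : 0 ≤ b := le_trans zero_le_one hb
  have h3 : d ^ 2 ≤ 2 * y ^ 2 + 2 * b ^ 2 * z ^ 2 := by nlinarith [sq_nonneg (y - b * z)]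
  have h4 : gg ^ 2 ≤ 3 * x ^ 2 + 3 * b ^ 2 * d ^ 2 + 3 * b ^ 2 * z ^ 2 := by
    nlinarith [sq_nonneg (x - b * d), sq_nonneg (x - b * z), sq_nonneg (b * d - b * z)]
  have h5 : b ^ 2 * d ^ 2 ≤ b ^ 2 * (2 * y ^ 2 + 2 * b ^ 2 * z ^ 2) :=
    mul_le_mul_of_nonneg_left h3 (sq_nonneg b)
  have hb2 : 1 ≤ b ^ 2 := by nlinarith
  have hb4 : b ^ 2 ≤ b ^ 4 := by nlinarith
  nlinarith [sq_nonneg x, sq_nonneg y, sq_nonneg z, mul_nonneg (sq_nonneg b) (sq_nonneg y),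
    mul_nonneg (mul_nonneg (sq_nonneg b) (sq_nonneg b)) (sq_nonneg z)]

/-- coercivity of the quadratic form built from the six coefficients
of the extended Jerison--Lee formula (display (2.8) in Flynn–Vétois). -/
theorem stmt6 (m : ℝ) (hm0 : 0 ≤ m) (hm1 : m < 1) :
    ∃ C : ℝ, 0 < C ∧ ∀ (n : ℕ) (D E G : EuclideanSpace ℂ (Fin n)) (g : ℂ) (f0 : ℝ),
      |f0| < ‖g‖ →
      C * (‖D‖ ^ 2 + ‖E‖ ^ 2 + ‖G‖ ^ 2) ≤
        JLc1 m (‖g‖) f0 *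
            ‖G + JLc2 m (‖g‖) f0 • D + JLc3 m (‖g‖) f0 • E‖ ^ 2 +
          JLc4 m (‖g‖) f0 * ‖D + JLc5 m (‖g‖) f0 • E‖ ^ 2 +
          JLc6 m (‖g‖) f0 * ‖E‖ ^ 2 := by
  have h1m : (0:ℝ) < 1 - m := by linarith
  set b : ℝ := 4 / (1 - m) with hbdef
  have hb : 1 ≤ b := by rw [hbdef, le_div_iff₀ h1m]; linarith
  have hb0 : 0 < b := lt_of_lt_of_le zero_lt_one hb
  set K : ℝ := 6 * b ^ 4 + 6 * b ^ 2 + 3 with hKdef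
  have hK : 0 < K := by positivity
  set α : ℝ := min (3 * (1 - m)) (1 / 2) with hαdef
  have hα : 0 < α := lt_min (by linarith) (by norm_num)
  refine ⟨α / K, by positivity, ?_⟩
  intro n D E G g f0 hfa
  set a := ‖g‖ with hadef
  have hc1 := c1_ge hm0 hm1 hfa
  have hc4 := c4_ge hm0 hm1 hfa
  have hc6 := c6_ge hm0 hm1 hfa
  have hb2 := c2_bound hm0 hm1 hfa
  have hb3 := c3_bound hm0 hm1 hfa
  have hb5 := c5_bound hm0 hm1 hfa
  set c2 := JLc2 m a f0
  set c3 := JLc3 m a f0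
  set c5 := JLc5 m a f0
  set X := G + c2 • D + c3 • E with hX
  set Y := D + c5 • E with hY
  have hDle : ‖D‖ ≤ ‖Y‖ + b * ‖E‖ := by
    have hD : D = Y - c5 • E := by rw [hY]; abel
    calc ‖D‖ = ‖Y - c5 • E‖ := by rw [← hD]
      _ ≤ ‖Y‖ + ‖c5 • E‖ := norm_sub_le _ _
      _ ≤ ‖Y‖ + b * ‖E‖ := by
          rw [norm_smul]
          exact add_le_add_right (mul_le_mul_of_nonneg_right hb5 (norm_nonneg E)) _
  have hGle : ‖G‖ ≤ ‖X‖ + b * ‖D‖ + b * ‖E‖ := by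
    have hG : G = X - c2 • D - c3 • E := by rw [hX]; abel
    calc ‖G‖ = ‖X - c2 • D - c3 • E‖ := by rw [← hG]
      _ ≤ ‖X - c2 • D‖ + ‖c3 • E‖ := norm_sub_le _ _
      _ ≤ ‖X‖ + ‖c2 • D‖ + ‖c3 • E‖ := by
          exact add_le_add_left (norm_sub_le _ _) _
      _ ≤ ‖X‖ + b * ‖D‖ + b * ‖E‖ := by
          rw [norm_smul, norm_smul]
          have := mul_le_mul_of_nonneg_right hb2 (norm_nonneg D)
          have := mul_le_mul_of_nonneg_right hb3 (norm_nonneg E)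
          gcongr
  have key := quad_bound b ‖X‖ ‖Y‖ ‖E‖ ‖D‖ ‖G‖ hb (norm_nonneg X) (norm_nonneg Y)
    (norm_nonneg E) (norm_nonneg D) (norm_nonneg G) hDle hGle
  have hα1 : α ≤ JLc1 m a f0 := le_trans (min_le_left _ _) hc1
  have hα4 : α ≤ JLc4 m a f0 := le_trans (min_le_right _ _) hc4
  have hα6 : α ≤ JLc6 m a f0 := le_trans (min_le_right _ _) hc6
  calc α / K * (‖D‖ ^ 2 + ‖E‖ ^ 2 + ‖G‖ ^ 2)
      ≤ α / K * (K * (‖X‖ ^ 2 + ‖Y‖ ^ 2 + ‖E‖ ^ 2)) := by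
        apply mul_le_mul_of_nonneg_left _ (by positivity)
        exact key
    _ = α * (‖X‖ ^ 2 + ‖Y‖ ^ 2 + ‖E‖ ^ 2) := by
        field_simp
    _ ≤ JLc1 m a f0 * ‖X‖ ^ 2 + JLc4 m a f0 * ‖Y‖ ^ 2 + JLc6 m a f0 * ‖E‖ ^ 2 := by
        nlinarith [mul_le_mul_of_nonneg_right hα1 (sq_nonneg ‖X‖),
          mul_le_mul_of_nonneg_right hα4 (sq_nonneg ‖Y‖),
          mul_le_mul_of_nonneg_right hα6 (sq_nonneg ‖E‖)]
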